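/- Let K be a field of characteristic ≠ 2 and let (a,b) be a nontrivial node. Then (a,b) is 1-times backtrackable (i.e., there exists a nontrivial node advancing to (a,b)) if and only if a² − b² is a square in K. Moreover, if (x,y) and (x',y') are nontrivial nodes with (x,y) ↦ (a,b) and (x',y') ↦ (a,b), then (x',y') = (x,y) or (x',y') = (y,x); that is, a once-backtrackable nontrivial node has exactly two parents, which are each other's reversals. -/
import Mathlib


namespace AGM

variable {K : Type*} [Field K]

/-- A node `(a,b)` is nontrivial if `a`, `b`, `a+b`, `a-b` are all nonzero. -/
def Nontriv (p : K × K) : Prop :=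
  p.1 ≠ 0 ∧ p.2 ≠ 0 ∧ p.1 + p.2 ≠ 0 ∧ p.1 - p.2 ≠ 0

/-- AGM advancement between nontrivial nodes: `2c = a + b` and `d² = ab`. -/
def Adv (p q : K × K) : Prop :=
  Nontriv p ∧ Nontriv q ∧ 2 * q.1 = p.1 + p.2 ∧ q.2 ^ 2 = p.1 * p.2

/-- `AdvN n p`: there is a chain of `n` successive AGM advancements through
nontrivial nodes starting at `p`. -/
def AdvN : ℕ → K × K → Prop
  | 0, p => Nontriv p
  | n + 1, p => ∃ q, Adv p q ∧ AdvN n q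

/-- `BackN n p`: there is a chain of `n` successive AGM advancements through
nontrivial nodes ending at `p`. -/
def BackN : ℕ → K × K → Prop
  | 0, p => Nontriv p
  | n + 1, p => ∃ q, Adv q p ∧ BackN n q

/-- Indefinitely advanceable nodes. -/
def AdvInf (p : K × K) : Prop := ∀ n, AdvN n p

/-- Indefinitely backtrackable nodes. -/
def BackInf (p : K × K) : Prop := ∀ n, BackN n p

/-- Nontrivial k-values: `k ∉ {0, 1, -1}`. -/
def Tk (k : K) : Prop := k ≠ 0 ∧ k ≠ 1 ∧ k ≠ -1

/-- k-advancement: `(1+k₁)² k₂² = 4 k₁` for nontrivial k-values. -/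
def kAdv (k₁ k₂ : K) : Prop := Tk k₁ ∧ Tk k₂ ∧ (1 + k₁) ^ 2 * k₂ ^ 2 = 4 * k₁

/-- `TAdvN n k`: a chain of `n` k-advancements within `T_K` starting at `k`. -/
def TAdvN : ℕ → K → Prop
  | 0, k => Tk k
  | n + 1, k => ∃ k₂, kAdv k k₂ ∧ TAdvN n k₂

/-- `TBackN n k`: a chain of `n` k-advancements within `T_K` ending at `k`. -/
def TBackN : ℕ → K → Prop
  | 0, k => Tk k
  | n + 1, k => ∃ k₁, kAdv k₁ k ∧ TBackN n k₁

/-- Indefinitely advanceable k-values. -/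
def TAdvInf (k : K) : Prop := ∀ n, TAdvN n k

/-- Indefinitely backtrackable k-values. -/
def TBackInf (k : K) : Prop := ∀ n, TBackN n k

end AGM

theorem stmt11 {K : Type*} [Field K] (hchar : (2 : K) ≠ 0)
    (a b : K) (hnt : AGM.Nontriv (a, b)) :
    ((∃ p : K × K, AGM.Adv p (a, b)) ↔ ∃ s : K, a ^ 2 - b ^ 2 = s ^ 2) ∧
    (∀ x y x' y' : K, AGM.Adv (x, y) (a, b) → AGM.Adv (x', y') (a, b) →
      (x', y') = (x, y) ∨ (x', y') = (y, x)) := by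
  constructor
  · constructor
    · rintro ⟨⟨x, y⟩, hp, hq, h1, h2⟩
      refine ⟨(x - y) / 2, ?_⟩
      field_simp
      linear_combination (2 * a + x + y) * h1 - 4 * h2
    · rintro ⟨s, hs⟩
      have ha := hnt.1
      have hb := hnt.2.1
      have hab := hnt.2.2.1
      have hab' := hnt.2.2.2
      simp only at ha hb hab hab'
      have hs0 : s ≠ 0 := by
        intro h
        exact mul_ne_zero hab hab' (by linear_combination hs + s * h)
      have hprod : (a + s) * (a - s) = b ^ 2 := by linear_combination hs
      have h1 : a + s ≠ 0 := by
        intro h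
        have hb2 : b ^ 2 = 0 := by linear_combination -hprod + (a - s) * h
        exact hb (pow_eq_zero_iff two_ne_zero |>.mp hb2)
      have h2 : a - s ≠ 0 := by
        intro h
        have hb2 : b ^ 2 = 0 := by linear_combination -hprod + (a + s) * h
        exact hb (pow_eq_zero_iff two_ne_zero |>.mp hb2)
      refine ⟨(a + s, a - s), ⟨h1, h2, ?_, ?_⟩, hnt, by ring, by linear_combination -hprod⟩
      · intro h
        exact ha (mul_left_cancel₀ hchar (by linear_combination h : 2 * a = 2 * 0))
      · intro h
        exact hs0 (mul_left_cancel₀ hchar (by linear_combination h : 2 * s = 2 * 0))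
  · rintro x y x' y' ⟨hp, hq, h1, h2⟩ ⟨hp', hq', h1', h2'⟩
    simp only at h1 h2 h1' h2'
    have key : (x' - x) * (x' - y) = 0 := by
      linear_combination x' * h1 - x' * h1' + h2' - h2
    rcases mul_eq_zero.mp key with h | h
    · left
      have hx : x' = x := by linear_combination h
      have hy : y' = y :=
        mul_left_cancel₀ hchar (by linear_combination 2 * (h1 - h1') - 2 * h)
      simp [hx, hy]
    · right
      have hx : x' = y := by linear_combination h
      have hy : y' = x :=
        mul_left_cancel₀ hchar (by linear_combination 2 * (h1 - h1') - 2 * h)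
      simp [hx, hy]
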